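/- Abelian limit lemma: let F : (0, 1] → ℂ be measurable and bounded on compact subsets of (0,1], with F(r) ∼ c/r as r → 0 (i.e. r·F(r) → c). Then (s−1)·s·∫_0^1 r^{s−1} F(r) dr → c as s ↓ 1. -/

import Mathlib

open Filter MeasureTheory Set

/-- Abelian limit lemma: let `F : (0,1] → ℂ` be measurable, bounded on compact subsets of
`(0,1]`, integrable against `r^{s-1}` on `(0,1]` for each `s > 1`, and satisfy `r · F r → c`
as `r → 0⁺`.  Then `(s-1) · s · ∫₀¹ r^{s-1} F r dr → c` as `s ↓ 1`. -/
theorem stmt_16 (F : ℝ → ℂ) (c : ℂ)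
    (hmeas : Measurable F)
    (hbdd : ∀ ε : ℝ, 0 < ε → ∃ C : ℝ, ∀ r ∈ Set.Icc ε 1, ‖F r‖ ≤ C)
    (hint : ∀ s : ℝ, 1 < s →
      IntegrableOn (fun r : ℝ => (r ^ (s - 1) : ℝ) • F r) (Set.Ioc 0 1))
    (hlim : Tendsto (fun r : ℝ => r • F r) (nhdsWithin 0 (Set.Ioi 0)) (nhds c)) :
    Tendsto (fun s : ℝ => ((s : ℂ) - 1) * (s : ℂ) *
        ∫ r in Set.Ioc (0:ℝ) 1, (r ^ (s - 1) : ℝ) • F r)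
      (nhdsWithin 1 (Set.Ioi 1)) (nhds c) := by
  set g : ℝ → ℂ := fun r => r • F r - c with hgdef
  -- integrability of r^{s-2} on Ioc 0 a
  have hrint : ∀ s : ℝ, 1 < s → ∀ a : ℝ, 0 < a →
      IntegrableOn (fun r : ℝ => r ^ (s - 2)) (Ioc (0:ℝ) a) := by
    intro s hs a ha
    exact (intervalIntegrable_iff_integrableOn_Ioc_of_le ha.le).mp
      (intervalIntegral.intervalIntegrable_rpow' (by linarith))
  -- value of ∫_0^δ r^{s-2}
  have hval : ∀ s : ℝ, 1 < s → ∀ a : ℝ, 0 < a →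
      ∫ r in Ioc (0:ℝ) a, r ^ (s - 2) = a ^ (s - 1) / (s - 1) := by
    intro s hs a ha
    rw [← intervalIntegral.integral_of_le ha.le,
      integral_rpow (Or.inl (by linarith))]
    rw [Real.zero_rpow (by linarith : s - 2 + 1 ≠ 0)]
    have h2 : s - 2 + 1 = s - 1 := by ring
    rw [h2]; ring
  -- the pointwise identity on Ioc 0 1
  have hpt : ∀ s : ℝ, ∀ r ∈ Ioc (0:ℝ) 1,
      (r ^ (s - 1) : ℝ) • F r - (r ^ (s - 2) : ℝ) • c = (r ^ (s - 2) : ℝ) • g r := by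
    intro s r hr
    simp only [hgdef, smul_sub, smul_smul]
    rw [show s - 1 = (s - 2) + 1 by ring, Real.rpow_add_one hr.1.ne']
  -- integrability of r^{s-2} • g
  have hintg : ∀ s : ℝ, 1 < s →
      IntegrableOn (fun r : ℝ => (r ^ (s - 2) : ℝ) • g r) (Ioc (0:ℝ) 1) := by
    intro s hs
    have h1 : IntegrableOn (fun r : ℝ => (r ^ (s - 2) : ℝ) • c) (Ioc (0:ℝ) 1) :=
      (hrint s hs 1 one_pos).smul_const c
    have h2 := (hint s hs).sub h1
    refine h2.congr ?_
    filter_upwards [ae_restrict_mem measurableSet_Ioc] with r hr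
    simpa using hpt s r hr
  -- key limit
  have key : Tendsto (fun s : ℝ => ((s : ℂ) - 1) *
      ∫ r in Ioc (0:ℝ) 1, (r ^ (s - 2) : ℝ) • g r) (nhdsWithin 1 (Ioi 1)) (nhds 0) := by
    rw [NormedAddCommGroup.tendsto_nhds_zero]
    intro ε hε
    obtain ⟨δ0, hδ0, hδ0'⟩ := Metric.tendsto_nhdsWithin_nhds.mp hlim (ε/2) (half_pos hε)
    set δ : ℝ := min (δ0/2) 1 with hδdef
    have hδpos : 0 < δ := lt_min (half_pos hδ0) one_pos
    have hδ1 : δ ≤ 1 := min_le_right _ _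
    have hgsmall : ∀ r ∈ Ioc (0:ℝ) δ, ‖g r‖ ≤ ε/2 := by
      intro r hr
      have h1 : r ∈ Ioi (0:ℝ) := hr.1
      have h2 : dist r 0 < δ0 := by
        rw [Real.dist_eq, sub_zero, abs_of_pos hr.1]
        calc r ≤ δ := hr.2
          _ ≤ δ0/2 := min_le_left _ _
          _ < δ0 := by linarith
      have := hδ0' h1 h2
      rw [dist_eq_norm] at this
      exact this.le
    obtain ⟨C, hC⟩ := hbdd δ hδpos
    set C' : ℝ := max C 0 + ‖c‖ + 1 with hC'def
    have hC'pos : 0 < C' := by positivity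
    have hgbig : ∀ r ∈ Ioc δ (1:ℝ), ‖g r‖ ≤ C' := by
      intro r hr
      have hrIcc : r ∈ Icc δ 1 := ⟨hr.1.le, hr.2⟩
      have h1 : ‖g r‖ ≤ ‖r • F r‖ + ‖c‖ := norm_sub_le _ _
      have h2 : ‖r • F r‖ = |r| * ‖F r‖ := norm_smul _ _
      have hr0 : 0 < r := hδpos.trans hr.1
      have h3 : |r| * ‖F r‖ ≤ 1 * (max C 0) := by
        apply mul_le_mul
        · rw [abs_of_pos hr0]; exact hr.2
        · exact (hC r hrIcc).trans (le_max_left _ _)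
        · exact norm_nonneg _
        · exact zero_le_one
      rw [hC'def]
      calc ‖g r‖ ≤ |r| * ‖F r‖ + ‖c‖ := by rw [← h2]; exact h1
        _ ≤ 1 * max C 0 + ‖c‖ := by linarith
        _ ≤ max C 0 + ‖c‖ + 1 := by linarith
    set η : ℝ := min 1 (ε * δ / (2 * C')) with hηdef
    have hηpos : 0 < η := lt_min one_pos (by positivity)
    have hmem : (1:ℝ) ∈ Ico (1:ℝ) (1 + η) := ⟨le_refl 1, by linarith⟩
    filter_upwards [Ioo_mem_nhdsGT_of_mem hmem] with s hs
    have hs1 : 1 < s := hs.1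
    have hs2 : s < 1 + η := hs.2
    have hsη : s - 1 < η := by linarith
    have hs2' : s - 2 ≤ 0 := by
      have : η ≤ 1 := min_le_left _ _
      linarith
    have hsm1pos : 0 < s - 1 := by linarith
    -- split the integral
    have hmeas_split : MeasurableSet (Ioc (0:ℝ) δ) := measurableSet_Ioc
    have hsplit : ∫ r in Ioc (0:ℝ) 1, (r ^ (s - 2) : ℝ) • g r
        = (∫ r in Ioc (0:ℝ) δ, (r ^ (s - 2) : ℝ) • g r)
          + ∫ r in Ioc δ (1:ℝ), (r ^ (s - 2) : ℝ) • g r := by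
      rw [← setIntegral_union (Set.Ioc_disjoint_Ioc_of_le le_rfl) measurableSet_Ioc
        ((hintg s hs1).mono_set (Ioc_subset_Ioc_right hδ1))
        ((hintg s hs1).mono_set (Ioc_subset_Ioc_left hδpos.le)),
        Ioc_union_Ioc_eq_Ioc hδpos.le hδ1]
    -- bound piece 1
    have hI1 : ‖∫ r in Ioc (0:ℝ) δ, (r ^ (s - 2) : ℝ) • g r‖
        ≤ (ε/2) * (δ ^ (s-1) / (s-1)) := by
      calc ‖∫ r in Ioc (0:ℝ) δ, (r ^ (s - 2) : ℝ) • g r‖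
          ≤ ∫ r in Ioc (0:ℝ) δ, ‖(r ^ (s - 2) : ℝ) • g r‖ := norm_integral_le_integral_norm _
        _ ≤ ∫ r in Ioc (0:ℝ) δ, (r ^ (s - 2)) * (ε/2) := by
            apply setIntegral_mono_on
            · exact ((hintg s hs1).mono_set (Ioc_subset_Ioc_right hδ1)).norm
            · exact (hrint s hs1 δ hδpos).mul_const _
            · exact measurableSet_Ioc
            · intro r hr
              rw [norm_smul, Real.norm_eq_abs, abs_of_nonneg (Real.rpow_nonneg hr.1.le _)]
              exact mul_le_mul_of_nonneg_left (hgsmall r hr) (Real.rpow_nonneg hr.1.le _)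
        _ = (ε/2) * (δ ^ (s-1) / (s-1)) := by
            rw [integral_mul_const, hval s hs1 δ hδpos]; ring
    -- bound piece 2
    have hI2 : ‖∫ r in Ioc δ (1:ℝ), (r ^ (s - 2) : ℝ) • g r‖ ≤ δ⁻¹ * C' := by
      have hb : ∀ r ∈ Ioc δ (1:ℝ), ‖(r ^ (s - 2) : ℝ) • g r‖ ≤ δ⁻¹ * C' := by
        intro r hr
        have hr0 : 0 < r := hδpos.trans hr.1
        have h1 : r ^ (s - 2) ≤ δ⁻¹ := by
          have h2 : r ^ (s - 2) ≤ r ^ (-1 : ℝ) :=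
            Real.rpow_le_rpow_of_exponent_ge hr0 hr.2 (by linarith)
          rw [Real.rpow_neg_one] at h2
          exact h2.trans (by
            apply inv_anti₀ hδpos hr.1.le)
        rw [norm_smul, Real.norm_eq_abs, abs_of_nonneg (Real.rpow_nonneg hr0.le _)]
        exact mul_le_mul h1 (hgbig r hr) (norm_nonneg _) (by positivity)
      have := norm_setIntegral_le_of_norm_le_const (C := δ⁻¹ * C')
        (μ := volume) (s := Ioc δ (1:ℝ)) (by
          rw [Real.volume_Ioc]; exact ENNReal.ofReal_lt_top) hb
      refine this.trans ?_
      have hμ : (volume (Ioc δ (1:ℝ))).toReal ≤ 1 := by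
        rw [Real.volume_Ioc, ENNReal.toReal_ofReal_eq_iff.mpr] <;> linarith [hδpos]
      calc δ⁻¹ * C' * (volume (Ioc δ (1:ℝ))).toReal ≤ δ⁻¹ * C' * 1 := by
            apply mul_le_mul_of_nonneg_left hμ (by positivity)
        _ = δ⁻¹ * C' := mul_one _
    -- combine
    have hnorm1 : ‖((s:ℂ) - 1)‖ = s - 1 := by
      rw [show ((s:ℂ) - 1) = ((s - 1 : ℝ) : ℂ) by push_cast; ring, Complex.norm_real,
        Real.norm_eq_abs, abs_of_pos hsm1pos]
    rw [norm_mul, hnorm1, hsplit]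
    calc (s-1) * ‖(∫ r in Ioc (0:ℝ) δ, (r ^ (s - 2) : ℝ) • g r)
          + ∫ r in Ioc δ (1:ℝ), (r ^ (s - 2) : ℝ) • g r‖
        ≤ (s-1) * ((ε/2) * (δ ^ (s-1) / (s-1)) + δ⁻¹ * C') := by
          apply mul_le_mul_of_nonneg_left _ hsm1pos.le
          exact (norm_add_le _ _).trans (add_le_add hI1 hI2)
      _ = (ε/2) * δ ^ (s-1) + (s-1) * (δ⁻¹ * C') := by
          field_simp
      _ < ε/2 + ε/2 := by
          apply add_lt_add_of_le_of_lt
          · have : δ ^ (s-1) ≤ 1 := Real.rpow_le_one hδpos.le hδ1 hsm1pos.le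
            nlinarith
          · have h1 : s - 1 < ε * δ / (2 * C') := hsη.trans_le (min_le_right _ _)
            have h2 : (s-1) * (δ⁻¹ * C') < (ε * δ / (2 * C')) * (δ⁻¹ * C') :=
              mul_lt_mul_of_pos_right h1 (by positivity)
            refine h2.trans_le (le_of_eq ?_)
            field_simp
      _ = ε := by ring
  -- the algebraic identity
  have ident : ∀ s ∈ Ioi (1:ℝ), (s : ℂ) * c + (s : ℂ) * (((s : ℂ) - 1) *
        ∫ r in Ioc (0:ℝ) 1, (r ^ (s - 2) : ℝ) • g r)
      = ((s : ℂ) - 1) * (s : ℂ) * ∫ r in Ioc (0:ℝ) 1, (r ^ (s - 1) : ℝ) • F r := by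
    intro s hs
    have hs1 : (1:ℝ) < s := hs
    have h1 : IntegrableOn (fun r : ℝ => (r ^ (s - 2) : ℝ) • c) (Ioc (0:ℝ) 1) :=
      (hrint s hs1 1 one_pos).smul_const c
    have hsplit : ∫ r in Ioc (0:ℝ) 1, (r ^ (s - 2) : ℝ) • g r
        = (∫ r in Ioc (0:ℝ) 1, (r ^ (s - 1) : ℝ) • F r)
          - (∫ r in Ioc (0:ℝ) 1, (r ^ (s - 2) : ℝ)) • c := by
      rw [← integral_smul_const, ← integral_sub (hint s hs1) h1]
      exact (setIntegral_congr_fun measurableSet_Ioc (fun r hr => (hpt s r hr))).symm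
    rw [hsplit, hval s hs1 1 one_pos, Real.one_rpow]
    have hne : ((s:ℝ) - 1 : ℝ) ≠ 0 := by linarith
    have hneC : ((s:ℂ) - 1) ≠ 0 := by
      rw [show ((s:ℂ) - 1) = ((s - 1 : ℝ) : ℂ) by push_cast; ring]
      exact_mod_cast hne
    rw [Complex.real_smul]
    push_cast
    field_simp
    ring
  -- conclude
  have h1 : Tendsto (fun s : ℝ => (s : ℂ)) (nhdsWithin 1 (Ioi 1)) (nhds (1:ℂ)) := by
    exact (Complex.continuous_ofReal.tendsto 1).comp (tendsto_id.mono_left nhdsWithin_le_nhds)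
  have final : Tendsto (fun s : ℝ => (s : ℂ) * c + (s : ℂ) * (((s : ℂ) - 1) *
      ∫ r in Ioc (0:ℝ) 1, (r ^ (s - 2) : ℝ) • g r)) (nhdsWithin 1 (Ioi 1)) (nhds c) := by
    have := (h1.mul (tendsto_const_nhds (x := c))).add (h1.mul key)
    simpa using this
  exact final.congr' (eventually_nhdsWithin_of_forall (fun s hs => ident s hs))
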